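/- Let V be a J-isometry, write the positive part of the selfadjoint operator J − VJV* via spectral calculus: p₊ := the spectral projection of J − VJV* onto (0,∞), and A := ((J − VJV*)₊)^{1/2}. Then A and p₊ are selfadjoint, A ≥ 0, p₊ is the orthogonal projection onto closure(Ran A), A = A p₊ = p₊ A, and Ran p₊ ⊆ Ker(V*J). Moreover A J A = p₊ and V*J A = 0. -/

import Mathlib

open ContinuousLinearMap

section Aux

variable {H : Type*} [NormedAddCommGroup H] [InnerProductSpace ℂ H] [CompleteSpace H]

local notation "⟪" x ", " y "⟫" => @inner ℂ _ _ x y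

private lemma sa_inner {T : H →L[ℂ] H} (hT : IsSelfAdjoint T) (x y : H) :
    ⟪T x, y⟫ = ⟪x, T y⟫ :=
  hT.isSymmetric x y

private lemma orth_range_eq_ker (T : H →L[ℂ] H) (hT : IsSelfAdjoint T) :
    (LinearMap.range (T : H →ₗ[ℂ] H))ᗮ = LinearMap.ker (T : H →ₗ[ℂ] H) := by
  ext x
  simp only [Submodule.mem_orthogonal, LinearMap.mem_ker, ContinuousLinearMap.coe_coe]
  constructor
  · intro h
    have h2 : ⟪T x, T x⟫ = 0 := by
      have := h (T (T x)) ⟨T x, rfl⟩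
      rwa [sa_inner hT] at this
    exact inner_self_eq_zero.mp h2
  · rintro h u ⟨y, rfl⟩
    rw [ContinuousLinearMap.coe_coe, sa_inner hT, h, inner_zero_right]

end Aux

theorem positive_part_properties {H : Type*} [NormedAddCommGroup H]
    [InnerProductSpace ℂ H] [CompleteSpace H]
    (J V : H →L[ℂ] H) (hJ : IsSelfAdjoint J) (hJ2 : J ∘L J = 1)
    (hV : ContinuousLinearMap.adjoint V ∘L J ∘L V = J)
    (Spos : H →L[ℂ] H) (hSpos : Spos.IsPositive)
    (hSneg : (Spos - (J - V ∘L J ∘L ContinuousLinearMap.adjoint V)).IsPositive)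
    (hSorth : Spos ∘L (Spos - (J - V ∘L J ∘L ContinuousLinearMap.adjoint V)) = 0)
    (A : H →L[ℂ] H) (hA : A.IsPositive) (hAsq : A ∘L A = Spos)
    (pp : H →L[ℂ] H) (hppsa : IsSelfAdjoint pp) (hppidem : pp ∘L pp = pp)
    (hpprange : LinearMap.range (pp : H →ₗ[ℂ] H) = (LinearMap.range (Spos : H →ₗ[ℂ] H)).topologicalClosure) :
    IsSelfAdjoint A ∧ IsSelfAdjoint pp ∧
    (∀ x : H, 0 ≤ (inner ℂ x (A x) : ℂ).re) ∧
    LinearMap.range (pp : H →ₗ[ℂ] H) = (LinearMap.range (A : H →ₗ[ℂ] H)).topologicalClosure ∧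
    A ∘L pp = A ∧ pp ∘L A = A ∧
    LinearMap.range (pp : H →ₗ[ℂ] H) ≤ LinearMap.ker ((ContinuousLinearMap.adjoint V ∘L J : H →L[ℂ] H) : H →ₗ[ℂ] H) ∧
    A ∘L J ∘L A = pp ∧
    ContinuousLinearMap.adjoint V ∘L J ∘L A = 0 := by
  set S : H →L[ℂ] H := J - V ∘L J ∘L ContinuousLinearMap.adjoint V with hSdef
  have hAsa : IsSelfAdjoint A := hA.isSelfAdjoint
  have hSpossa : IsSelfAdjoint Spos := hSpos.isSelfAdjoint
  have hSsa : IsSelfAdjoint S := by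
    have := hSpossa.sub hSneg.isSelfAdjoint
    simpa using this
  -- positivity statement
  have hApos : ∀ x : H, 0 ≤ (inner ℂ x (A x) : ℂ).re := by
    intro x
    have := hA.inner_nonneg_right x
    exact (Complex.nonneg_iff.mp this).1
  -- pointwise versions of basic hypotheses
  have hAsq' : ∀ x, A (A x) = Spos x := by
    intro x
    have := ContinuousLinearMap.ext_iff.mp hAsq x
    simpa using this
  have hppidem' : ∀ x, pp (pp x) = pp x := by
    intro x
    have := ContinuousLinearMap.ext_iff.mp hppidem x
    simpa using this
  have hJ2' : ∀ x, J (J x) = x := by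
    intro x
    have := ContinuousLinearMap.ext_iff.mp hJ2 x
    simpa using this
  have hV' : ∀ x, ContinuousLinearMap.adjoint V (J (V x)) = J x := by
    intro x
    have := ContinuousLinearMap.ext_iff.mp hV x
    simpa using this
  -- kernels agree
  have hkerA : LinearMap.ker (A : H →ₗ[ℂ] H) = LinearMap.ker (Spos : H →ₗ[ℂ] H) := by
    ext x
    simp only [LinearMap.mem_ker, ContinuousLinearMap.coe_coe]
    constructor
    · intro h
      rw [← hAsq' x, h, map_zero]
    · intro h
      have h2 : (inner ℂ (A x) (A x) : ℂ) = 0 := by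
        rw [sa_inner hAsa, hAsq' x, h, inner_zero_right]
      exact inner_self_eq_zero.mp h2
  -- the two closures agree
  have hclos : (LinearMap.range (A : H →ₗ[ℂ] H)).topologicalClosure
      = (LinearMap.range (Spos : H →ₗ[ℂ] H)).topologicalClosure := by
    rw [← Submodule.orthogonal_orthogonal_eq_closure,
      ← Submodule.orthogonal_orthogonal_eq_closure,
      orth_range_eq_ker A hAsa, orth_range_eq_ker Spos hSpossa, hkerA]
  have hrangeA : LinearMap.range (pp : H →ₗ[ℂ] H) = (LinearMap.range (A : H →ₗ[ℂ] H)).topologicalClosure := by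
    rw [hpprange, hclos]
  -- pp fixes its range
  have hfix : ∀ z ∈ LinearMap.range (pp : H →ₗ[ℂ] H), pp z = z := by
    rintro _ ⟨y, rfl⟩
    exact hppidem' y
  have hppA' : ∀ x, pp (A x) = A x := by
    intro x
    refine hfix _ ?_
    rw [hrangeA]
    exact (LinearMap.range (A : H →ₗ[ℂ] H)).le_topologicalClosure ⟨x, rfl⟩
  have hppA : pp ∘L A = A := by
    ext x; simpa using hppA' x
  have hApp : A ∘L pp = A := by
    have := congrArg ContinuousLinearMap.adjoint hppA
    rwa [adjoint_comp, hAsa.adjoint_eq, hppsa.adjoint_eq] at this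
  have hApp' : ∀ x, A (pp x) = A x := by
    intro x
    have := ContinuousLinearMap.ext_iff.mp hApp x
    simpa using this
  have hppSpos' : ∀ x, pp (Spos x) = Spos x := by
    intro x
    refine hfix _ ?_
    rw [hpprange]
    exact (LinearMap.range (Spos : H →ₗ[ℂ] H)).le_topologicalClosure ⟨x, rfl⟩
  -- pp kills Spos - S
  have hppN' : ∀ x, pp ((Spos - S) x) = 0 := by
    intro x
    have hk : (Spos - S) x ∈ LinearMap.ker (Spos : H →ₗ[ℂ] H) := by
      have := ContinuousLinearMap.ext_iff.mp hSorth x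
      simpa [LinearMap.mem_ker] using this
    have hk2 : (Spos - S) x ∈ (LinearMap.range (Spos : H →ₗ[ℂ] H))ᗮ := by
      rwa [orth_range_eq_ker Spos hSpossa]
    have hk3 : (Spos - S) x ∈ (LinearMap.range (pp : H →ₗ[ℂ] H))ᗮ := by
      rw [hpprange, ← Submodule.orthogonal_orthogonal_eq_closure]
      exact Submodule.le_orthogonal_orthogonal _ hk2
    rw [orth_range_eq_ker pp hppsa] at hk3
    exact hk3
  have hppS' : ∀ x, pp (S x) = Spos x := by
    intro x
    have h1 := hppN' x
    have h2 : pp (Spos x) - pp (S x) = 0 := by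
      rw [← map_sub]
      simpa using h1
    have h3 : pp (S x) = pp (Spos x) := by
      rw [sub_eq_zero] at h2
      exact h2.symm
    rw [h3, hppSpos' x]
  have hppS : pp ∘L S = Spos := by
    ext x; simpa using hppS' x
  have hSpp : S ∘L pp = Spos := by
    have := congrArg ContinuousLinearMap.adjoint hppS
    rwa [adjoint_comp, hSsa.adjoint_eq, hppsa.adjoint_eq, hSpossa.adjoint_eq] at this
  have hSpp' : ∀ x, S (pp x) = Spos x := by
    intro x
    have := ContinuousLinearMap.ext_iff.mp hSpp x
    simpa using this
  -- V* J S = 0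
  have hVJS : ∀ x, ContinuousLinearMap.adjoint V (J (S x)) = 0 := by
    intro x
    have hSx : S x = J x - V (J (ContinuousLinearMap.adjoint V x)) := by
      simp [hSdef]
    rw [hSx, map_sub, map_sub, hJ2', hV', hJ2', sub_self]
  -- range pp ≤ ker (V* J)
  have hkerVJ : LinearMap.range (Spos : H →ₗ[ℂ] H)
      ≤ LinearMap.ker ((ContinuousLinearMap.adjoint V ∘L J : H →L[ℂ] H) : H →ₗ[ℂ] H) := by
    rintro _ ⟨x, rfl⟩
    have : Spos x = S (pp x) := (hSpp' x).symm
    simp only [LinearMap.mem_ker, ContinuousLinearMap.coe_coe, ContinuousLinearMap.coe_comp', Function.comp_apply, this]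
    exact hVJS (pp x)
  have hppker : LinearMap.range (pp : H →ₗ[ℂ] H)
      ≤ LinearMap.ker ((ContinuousLinearMap.adjoint V ∘L J : H →L[ℂ] H) : H →ₗ[ℂ] H) := by
    rw [hpprange]
    exact Submodule.topologicalClosure_minimal _ hkerVJ
      (ContinuousLinearMap.isClosed_ker (ContinuousLinearMap.adjoint V ∘L J))
  -- V* J A = 0
  have hVJA : ContinuousLinearMap.adjoint V ∘L J ∘L A = 0 := by
    ext x
    have hm : A x ∈ LinearMap.range (pp : H →ₗ[ℂ] H) := ⟨A x, hppA' x⟩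
    have := hppker hm
    simpa [LinearMap.mem_ker] using this
  -- S J S = S
  have hSJS : ∀ x, S (J (S x)) = S x := by
    intro x
    have h1 : S (J (S x)) = J (J (S x)) - V (J (ContinuousLinearMap.adjoint V (J (S x)))) := by
      simp [hSdef]
    rw [h1, hJ2', hVJS x, map_zero, map_zero, sub_zero]
  -- Spos J Spos = Spos
  have hSposJSpos : ∀ x, Spos (J (Spos x)) = Spos x := by
    intro x
    calc Spos (J (Spos x)) = Spos (J (S (pp x))) := by rw [hSpp' x]
      _ = pp (S (J (S (pp x)))) := (hppS' _).symm
      _ = pp (S (pp x)) := by rw [hSJS]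
      _ = pp (Spos x) := by rw [hSpp' x]
      _ = Spos x := hppSpos' x
  -- the main operator C := AJA - pp is zero
  set C : H →L[ℂ] H := A ∘L (J ∘L A) - pp with hCdef
  have hC' : ∀ x, C x = A (J (A x)) - pp x := by
    intro x; simp [hCdef]
  have hACA0 : ∀ x, A (C (A x)) = 0 := by
    intro x
    rw [hC' (A x), map_sub, hppA' x, hAsq' x, hAsq' (J (Spos x)), hSposJSpos x, sub_self]
  have hCA : ∀ x y, (inner ℂ (C (A x)) (A y) : ℂ) = 0 := by
    intro x y
    rw [← sa_inner hAsa, hACA0 x, inner_zero_left]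
  have hclosset : (LinearMap.range (pp : H →ₗ[ℂ] H) : Set H) ⊆ closure ((LinearMap.range (A : H →ₗ[ℂ] H) : Submodule ℂ H) : Set H) := by
    intro z hz
    have hz2 : z ∈ LinearMap.range (pp : H →ₗ[ℂ] H) := hz
    rw [hrangeA] at hz2
    exact hz2
  have hCAb : ∀ x, ∀ b ∈ closure ((LinearMap.range (A : H →ₗ[ℂ] H) : Submodule ℂ H) : Set H),
      (inner ℂ (C (A x)) b : ℂ) = 0 := by
    intro x b hb
    have heq : Set.EqOn (fun b => (inner ℂ (C (A x)) b : ℂ)) (fun _ => 0)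
        ((LinearMap.range (A : H →ₗ[ℂ] H) : Submodule ℂ H) : Set H) := by
      rintro _ ⟨y, rfl⟩
      exact hCA x y
    have hcont : Continuous (fun b : H => (inner ℂ (C (A x)) b : ℂ)) :=
      continuous_const.inner continuous_id
    exact heq.closure hcont continuous_const hb
  have hCb : ∀ a ∈ closure ((LinearMap.range (A : H →ₗ[ℂ] H) : Submodule ℂ H) : Set H),
      ∀ b ∈ closure ((LinearMap.range (A : H →ₗ[ℂ] H) : Submodule ℂ H) : Set H),
      (inner ℂ (C a) b : ℂ) = 0 := by
    intro a ha b hb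
    have heq : Set.EqOn (fun a => (inner ℂ (C a) b : ℂ)) (fun _ => 0)
        ((LinearMap.range (A : H →ₗ[ℂ] H) : Submodule ℂ H) : Set H) := by
      rintro _ ⟨y, rfl⟩
      exact hCAb y b hb
    have hcont : Continuous (fun a : H => (inner ℂ (C a) b : ℂ)) :=
      (C.continuous.inner continuous_const)
    exact heq.closure hcont continuous_const ha
  have hCpp' : ∀ x, C (pp x) = C x := by
    intro x
    rw [hC', hC', hApp' x, hppidem' x]
  have hppC' : ∀ x, pp (C x) = C x := by
    intro x
    rw [hC', map_sub, hppA' (J (A x)), hppidem' x]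
  have hC0 : ∀ x, C x = 0 := by
    intro x
    have key : ∀ y, (inner ℂ (C x) y : ℂ) = 0 := by
      intro y
      have h1 : (inner ℂ (C x) y : ℂ) = inner ℂ (C (pp x)) (pp y) := by
        conv_lhs => rw [← hppC' x]
        rw [sa_inner hppsa, ← hCpp' x]
      rw [h1]
      exact hCb _ (hclosset ⟨x, rfl⟩) _ (hclosset ⟨y, rfl⟩)
    have := key (C x)
    exact inner_self_eq_zero.mp this
  have hAJA : A ∘L J ∘L A = pp := by
    ext x
    have h := hC0 x
    rw [hC'] at h
    have h2 := sub_eq_zero.mp h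
    simpa using h2
  exact ⟨hAsa, hppsa, hApos, hrangeA, hApp, hppA, hppker, hAJA, hVJA⟩
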